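/- For any field K, the space χ(K) of all orderings of K, equipped with the Harrison topology, is a compact and totally disconnected topological space. -/

import Mathlib

/-- An ordering of a (comm) ring `K`: `P + P ⊆ P`, `P·P ⊆ P`, `-1 ∉ P`, `P ∪ (-P) = K`. -/
def IsOrdering {K : Type*} [CommRing K] (P : Set K) : Prop :=
  (∀ x ∈ P, ∀ y ∈ P, x + y ∈ P) ∧ (∀ x ∈ P, ∀ y ∈ P, x * y ∈ P) ∧
    (-1 : K) ∉ P ∧ ∀ x : K, x ∈ P ∨ -x ∈ P

/-- `sumsOfPowers K n` is the set of finite sums of `n`-th powers of elements of `K`. -/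
def sumsOfPowers (K : Type*) [CommRing K] (n : ℕ) : Set K :=
  {a | ∃ (m : ℕ) (f : Fin m → K), a = ∑ i, f i ^ n}

/-- The Harrison topology on the space `χ(K)` of orderings of a field `K`, generated by the
sets `H(a) = {P ∈ χ(K) | a ∈ P}` for `a ≠ 0`. -/
def harrisonTopology (K : Type*) [Field K] : TopologicalSpace {P : Set K // IsOrdering P} :=
  TopologicalSpace.generateFrom {S | ∃ a : K, a ≠ 0 ∧ S = {P | a ∈ P.1}}

section AuxOrdering

variable {K : Type*} [Field K] {P : Set K}

theorem IsOrdering.zero_mem (h : IsOrdering P) : (0 : K) ∈ P := by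
  rcases h.2.2.2 0 with h0 | h0 <;> simpa using h0

theorem IsOrdering.mul_self_mem (h : IsOrdering P) (x : K) : x * x ∈ P := by
  rcases h.2.2.2 x with hx | hx
  · exact h.2.1 x hx x hx
  · have := h.2.1 _ hx _ hx
    simpa using this

theorem IsOrdering.not_mem_iff (h : IsOrdering P) {a : K} (ha : a ≠ 0) :
    a ∉ P ↔ -a ∈ P := by
  constructor
  · intro haP
    rcases h.2.2.2 a with h' | h'
    · exact absurd h' haP
    · exact h'
  · intro hna haP
    apply h.2.2.1
    have h1 : a * -a ∈ P := h.2.1 _ haP _ hna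
    have h2 : (a * -a) * (a⁻¹ * a⁻¹) ∈ P := h.2.1 _ h1 _ (h.mul_self_mem a⁻¹)
    have heq : (a * -a) * (a⁻¹ * a⁻¹) = -1 := by
      field_simp
    rwa [heq] at h2

end AuxOrdering

/-- `χ(K)` with the Harrison topology is compact and totally disconnected. -/
theorem stmt2 (K : Type*) [Field K] :
    @CompactSpace {P : Set K // IsOrdering P} (harrisonTopology K) ∧
      @TotallyDisconnectedSpace {P : Set K // IsOrdering P} (harrisonTopology K) := by
  classical
  letI : TopologicalSpace {P : Set K // IsOrdering P} := harrisonTopology K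
  let X := {P : Set K // IsOrdering P}
  set e : X → (K → Bool) := fun P a => decide (a ∈ P.1) with he
  -- basic open sets
  have hopen : ∀ a : K, IsOpen {P : X | a ∈ P.1} := by
    intro a
    by_cases ha : a = 0
    · subst ha
      have : {P : X | (0 : K) ∈ P.1} = Set.univ :=
        Set.eq_univ_of_forall fun P => P.2.zero_mem
      rw [this]; exact isOpen_univ
    · exact TopologicalSpace.isOpen_generateFrom_of_mem
        (g := {S | ∃ a : K, a ≠ 0 ∧ S = {P : X | a ∈ P.1}}) ⟨a, ha, rfl⟩
  have hnotopen : ∀ a : K, IsOpen {P : X | a ∉ P.1} := by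
    intro a
    by_cases ha : a = 0
    · subst ha
      have : {P : X | (0 : K) ∉ P.1} = (∅ : Set X) := by
        ext P; simp [P.2.zero_mem]
      rw [this]; exact isOpen_empty
    · have : {P : X | a ∉ P.1} = {P : X | -a ∈ P.1} := by
        ext P; exact P.2.not_mem_iff ha
      rw [this]; exact hopen (-a)
  -- continuity of e
  have hconte : Continuous e := by
    refine continuous_pi fun a => ?_
    rw [continuous_discrete_rng]
    intro b
    cases b
    · have : (fun P : X => e P a) ⁻¹' {false} = {P : X | a ∉ P.1} := by
        ext P; simp [he]
      rw [this]; exact hnotopen a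
    · have : (fun P : X => e P a) ⁻¹' {true} = {P : X | a ∈ P.1} := by
        ext P; simp [he]
      rw [this]; exact hopen a
  -- e is inducing
  have hind : Topology.IsInducing e := by
    refine ⟨le_antisymm (continuous_iff_le_induced.mp hconte) ?_⟩
    refine le_generateFrom ?_
    rintro s ⟨a, ha, rfl⟩
    rw [isOpen_induced_iff]
    refine ⟨{f : K → Bool | f a = true}, ?_, ?_⟩
    · exact (isOpen_discrete ({true} : Set Bool)).preimage
        (continuous_apply (A := fun _ : K => Bool) a)
    · ext P; simp [he]; exact Iff.rfl
  -- e is injective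
  have hinj : Function.Injective e := by
    intro P Q h
    refine Subtype.ext (Set.ext fun a => ?_)
    have := congrFun h a
    simpa [he] using this
  -- the range of e is closed
  have hrange : Set.range e =
      {f : K → Bool | (∀ x y : K, f x = true → f y = true → f (x + y) = true) ∧
        (∀ x y : K, f x = true → f y = true → f (x * y) = true) ∧
        f (-1) = false ∧ ∀ x : K, f x = true ∨ f (-x) = true} := by
    ext f
    constructor
    · rintro ⟨P, rfl⟩
      refine ⟨?_, ?_, ?_, ?_⟩
      · intro x y hx hy
        simp only [he, decide_eq_true_eq] at hx hy ⊢
        exact P.2.1 x hx y hy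
      · intro x y hx hy
        simp only [he, decide_eq_true_eq] at hx hy ⊢
        exact P.2.2.1 x hx y hy
      · simp only [he, decide_eq_false_iff_not]
        exact P.2.2.2.1
      · intro x
        simp only [he, decide_eq_true_eq]
        exact P.2.2.2.2 x
    · rintro ⟨h1, h2, h3, h4⟩
      refine ⟨⟨{a | f a = true},
        ⟨fun x hx y hy => h1 x y hx hy, fun x hx y hy => h2 x y hx hy, ?_, h4⟩⟩, ?_⟩
      · simp [h3]
      · funext a
        simp only [he]
        cases h : f a <;> simp [h]
  have hclosedrange : IsClosed (Set.range e) := by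
    rw [hrange]
    have hc : ∀ (a : K) (b : Bool), IsClosed {f : K → Bool | f a = b} := by
      intro a b
      have h := (isClosed_discrete ({b} : Set Bool)).preimage
        (continuous_apply (A := fun _ : K => Bool) a)
      exact h
    have hco : ∀ (a : K) (b : Bool), IsOpen {f : K → Bool | f a = b} := by
      intro a b
      have h := (isOpen_discrete ({b} : Set Bool)).preimage
        (continuous_apply (A := fun _ : K => Bool) a)
      exact h
    have himp : ∀ x y z : K,
        IsClosed {f : K → Bool | f x = true → f y = true → f z = true} := by
      intro x y z
      have : {f : K → Bool | f x = true → f y = true → f z = true} =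
          {f : K → Bool | f x = true}ᶜ ∪ ({f : K → Bool | f y = true}ᶜ ∪
            {f : K → Bool | f z = true}) := by
        ext f
        by_cases hx : f x = true <;> by_cases hy : f y = true <;> simp [hx, hy]
      rw [this]
      exact ((hco x true).isClosed_compl).union
        (((hco y true).isClosed_compl).union (hc z true))
    simp only [Set.setOf_and]
    refine IsClosed.inter ?_ (IsClosed.inter ?_ (IsClosed.inter ?_ ?_))
    · rw [Set.setOf_forall]
      refine isClosed_iInter fun x => ?_
      rw [Set.setOf_forall]
      exact isClosed_iInter fun y => himp x y (x + y)
    · rw [Set.setOf_forall]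
      refine isClosed_iInter fun x => ?_
      rw [Set.setOf_forall]
      exact isClosed_iInter fun y => himp x y (x * y)
    · exact hc (-1) false
    · rw [Set.setOf_forall]
      refine isClosed_iInter fun x => ?_
      have : {f : K → Bool | f x = true ∨ f (-x) = true} =
          {f : K → Bool | f x = true} ∪ {f : K → Bool | f (-x) = true} := rfl
      rw [this]
      -- union of two clopen sets: closed since complement is open
      have : ({f : K → Bool | f x = true} ∪ {f : K → Bool | f (-x) = true}) =
          ({f : K → Bool | f x = false} ∩ {f : K → Bool | f (-x) = false})ᶜ := by
        ext f
        cases h1 : f x <;> cases h2 : f (-x) <;> simp [h1, h2]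
      rw [this]
      exact ((hco x false).inter (hco (-x) false)).isClosed_compl
  have hclemb : Topology.IsClosedEmbedding e := ⟨⟨hind, hinj⟩, hclosedrange⟩
  constructor
  · exact hclemb.compactSpace
  · exact hclemb.isEmbedding.isTotallyDisconnected_range.mp
      (isTotallyDisconnected_of_totallyDisconnectedSpace _)
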